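/- Let n ≥ 1, let f : [0,1) → ℝ be defined by f(0) = 1/2 and f(x) = (1 − √(1 − x²))/x² for 0 < x < 1, and let u, v ∈ ℝ^{n+1} satisfy ‖u‖² + ‖v‖² = 2, ⟨u, v⟩ = 0, and ‖u‖ < ‖v‖. Then ‖u‖·‖v‖ < 1, √(f(‖u‖·‖v‖))·‖v‖ = 1, and setting p = ‖v‖·u and q = v/‖v‖, one has ‖p‖ < 1, ‖q‖ = 1, ⟨p,q⟩ = 0, and √(f(‖p‖))·p_j + i·q_j/√(f(‖p‖)) = u_j + i·v_j for every j. -/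

import Mathlib

open scoped RealInnerProductSpace

/-- The auxiliary function `f` of Section 3.1: `f(0) = 1/2` and
`f(x) = (1 − √(1 − x²))/x²` for `x ≠ 0`. -/
noncomputable def auxF (x : ℝ) : ℝ :=
  if x = 0 then 1 / 2 else (1 - Real.sqrt (1 - x ^ 2)) / x ^ 2

lemma auxF_sqrt_key (a b : ℝ) (ha : 0 ≤ a) (hab : a < b) (h2 : a ^ 2 + b ^ 2 = 2) :
    Real.sqrt (auxF (a * b)) = 1 / b := by
  have hb : 0 < b := lt_of_le_of_lt ha hab
  by_cases hA : a = 0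
  · subst hA
    have hb2 : b ^ 2 = 2 := by linarith
    have hbv : b = Real.sqrt 2 := by
      rw [show (2:ℝ) = b ^ 2 from hb2.symm, Real.sqrt_sq hb.le]
    have h0 : auxF 0 = 2⁻¹ := by norm_num [auxF]
    rw [zero_mul, h0, hbv, Real.sqrt_inv, one_div]
  · have hA' : a * b ≠ 0 := mul_ne_zero hA hb.ne'
    have hb1 : 1 < b ^ 2 := by nlinarith
    have h1 : 1 - (a * b) ^ 2 = (b ^ 2 - 1) ^ 2 := by nlinarith
    have : auxF (a * b) = 1 / b ^ 2 := by
      rw [auxF, if_neg hA', h1, Real.sqrt_sq (by linarith)]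
      have ha0 : 0 < a := lt_of_le_of_ne ha (Ne.symm hA)
      field_simp
      nlinarith
    rw [this, one_div, Real.sqrt_inv, Real.sqrt_sq hb.le, one_div]

/-- The surjectivity argument of Lemma 3.1: if `u, v ∈ ℝ^{n+1}` satisfy
`‖u‖² + ‖v‖² = 2`, `⟨u, v⟩ = 0` and `‖u‖ < ‖v‖`, then `‖u‖·‖v‖ < 1`,
`√(f(‖u‖·‖v‖))·‖v‖ = 1`, and `(p, q) = (‖v‖·u, v/‖v‖)` lies in the open unit disk
cotangent bundle of `Sⁿ` with `√(f(‖p‖))·p_j + i·q_j/√(f(‖p‖)) = u_j + i·v_j`. -/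
theorem psiP_lift_surjective (n : ℕ) (hn : 1 ≤ n)
    (u v : EuclideanSpace ℝ (Fin (n + 1)))
    (huv : ‖u‖ ^ 2 + ‖v‖ ^ 2 = 2) (horth : ⟪u, v⟫ = 0) (hlt : ‖u‖ < ‖v‖)
    (p q : EuclideanSpace ℝ (Fin (n + 1)))
    (hpdef : p = ‖v‖ • u) (hqdef : q = (‖v‖)⁻¹ • v) :
    ‖u‖ * ‖v‖ < 1 ∧
    Real.sqrt (auxF (‖u‖ * ‖v‖)) * ‖v‖ = 1 ∧
    ‖p‖ < 1 ∧ ‖q‖ = 1 ∧ ⟪p, q⟫ = 0 ∧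
    ∀ j, ((Real.sqrt (auxF ‖p‖) * p j : ℝ) : ℂ) +
        Complex.I * ((q j / Real.sqrt (auxF ‖p‖) : ℝ) : ℂ) =
      ((u j : ℝ) : ℂ) + Complex.I * ((v j : ℝ) : ℂ) := by
  set a := ‖u‖ with ha
  set b := ‖v‖ with hb
  have ha0 : 0 ≤ a := norm_nonneg u
  have hb0 : 0 < b := lt_of_le_of_lt ha0 hlt
  have hkey : Real.sqrt (auxF (a * b)) = 1 / b := auxF_sqrt_key a b ha0 hlt huv
  have hab1 : a * b < 1 := by nlinarith
  have hnp : ‖p‖ = a * b := by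
    rw [hpdef, norm_smul, Real.norm_eq_abs, abs_of_pos hb0, mul_comm]
  have hnq : ‖q‖ = 1 := by
    rw [hqdef, norm_smul, Real.norm_eq_abs, abs_of_pos (inv_pos.2 hb0)]
    field_simp
    exact hb.symm
  refine ⟨hab1, ?_, ?_, hnq, ?_, ?_⟩
  · rw [hkey]; field_simp
  · rw [hnp]; exact hab1
  · rw [hpdef, hqdef, inner_smul_left, inner_smul_right, horth]; ring
  · intro j
    have hpj : p j = b * u j := by rw [hpdef]; rfl
    have hqj : q j = b⁻¹ * v j := by rw [hqdef]; rfl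
    rw [hnp, hkey, hpj, hqj]
    have : 1 / b * (b * u j) = u j := by field_simp
    rw [this]
    have : b⁻¹ * v j / (1 / b) = v j := by field_simp
    rw [this]
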